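/- RD* is transitive: if A is an RD*-submodule of B and B is an RD*-submodule of M, then A is an RD*-submodule of M. -/

import Mathlib

open Cardinal

universe u v

variable {R : Type u} [CommRing R] [IsDomain R]
variable {M : Type v} [AddCommGroup M] [Module R M]

/-- `A` is a relatively divisible (RD) submodule of `M`. -/
def IsRD (A : Submodule R M) : Prop :=
  ∀ (r : R) (m : M), r • m ∈ A → ∃ a ∈ A, r • a = r • m

/-- `A` is relatively divisible within the submodule `N` of `M`. -/
def IsRDWithin (A N : Submodule R M) : Prop :=
  A ≤ N ∧ ∀ (r : R) (m : M), m ∈ N → r • m ∈ A → ∃ a ∈ A, r • a = r • m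

/-- `A` is an RD*-submodule of `M`: RD, and every finite rank submodule of `M ⧸ A`
has a countable rank preimage. -/
def IsRDStar (A : Submodule R M) : Prop :=
  IsRD A ∧ ∀ Q : Submodule R (M ⧸ A), Module.rank R ↥Q < ℵ₀ →
    ∃ C : Submodule R M, Module.rank R ↥C ≤ ℵ₀ ∧ C.map A.mkQ = Q

/-- `A` is an RD*-submodule of the submodule `N` of `M`. -/
def IsRDStarWithin (A N : Submodule R M) : Prop :=
  IsRDWithin A N ∧ ∀ Q : Submodule R (M ⧸ A), Q ≤ N.map A.mkQ →
    Module.rank R ↥Q < ℵ₀ →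
    ∃ C : Submodule R M, C ≤ N ∧ Module.rank R ↥C ≤ ℵ₀ ∧ C.map A.mkQ = Q

/-- `A` is a direct summand of `M`. -/
def IsSummand (A : Submodule R M) : Prop :=
  ∃ P : Submodule R M, A ⊓ P = ⊥ ∧ A ⊔ P = ⊤

/-- `A` is a direct summand of the submodule `N` of `M`. -/
def IsSummandWithin (A N : Submodule R M) : Prop :=
  A ≤ N ∧ ∃ P ≤ N, A ⊓ P = ⊥ ∧ A ⊔ P = N

/-- A G*(ℵ₀)-family of RD-submodules of `M`. -/
def IsGStarFamily (𝒢 : Set (Submodule R M)) : Prop :=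
  (∀ A ∈ 𝒢, IsRD A) ∧ (⊥ : Submodule R M) ∈ 𝒢 ∧ (⊤ : Submodule R M) ∈ 𝒢 ∧
  (∀ c ⊆ 𝒢, IsChain (· ≤ ·) c → c.Nonempty → sSup c ∈ 𝒢) ∧
  ∀ C ∈ 𝒢, ∀ X : Set M, X.Countable →
    ∃ B ∈ 𝒢, C ≤ B ∧ X ⊆ ↑B ∧ Module.rank R ↥(B.map C.mkQ) ≤ ℵ₀

/-- A G*(ℵ₀)-family of RD-submodules of the submodule `N` of `M`. -/
def IsGStarFamilyWithin (𝒢 : Set (Submodule R M)) (N : Submodule R M) : Prop :=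
  (∀ A ∈ 𝒢, IsRDWithin A N) ∧ (⊥ : Submodule R M) ∈ 𝒢 ∧ N ∈ 𝒢 ∧
  (∀ c ⊆ 𝒢, IsChain (· ≤ ·) c → c.Nonempty → sSup c ∈ 𝒢) ∧
  ∀ C ∈ 𝒢, ∀ X : Set M, X ⊆ ↑N → X.Countable →
    ∃ B ∈ 𝒢, C ≤ B ∧ X ⊆ ↑B ∧ Module.rank R ↥(B.map C.mkQ) ≤ ℵ₀

/-- `A` is ultra-balanced in `M`: an RD-submodule that is a direct summand of every
RD-submodule `C` of `M` containing `A` with `C/A` of finite rank. -/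
def IsUltraBalanced (A : Submodule R M) : Prop :=
  IsRD A ∧ ∀ C : Submodule R M, IsRD C → A ≤ C →
    Module.rank R ↥(C.map A.mkQ) < ℵ₀ →
    ∃ D ≤ C, A ⊓ D = ⊥ ∧ A ⊔ D = C

/-- `N` is a direct sum of submodules of countable rank. -/
def DSumCountableRank (R : Type u) [CommRing R] (N : Type v) [AddCommGroup N]
    [Module R N] : Prop :=
  ∃ (ι : Type v) (f : ι → Submodule R N), iSupIndep f ∧
    iSup f = ⊤ ∧ ∀ i, Module.rank R ↥(f i) ≤ ℵ₀

/-- `N` is finitely decomposable: a direct sum of finite rank submodules. -/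
def FinDecomp (R : Type u) [CommRing R] (N : Type v) [AddCommGroup N]
    [Module R N] : Prop :=
  ∃ (ι : Type v) (f : ι → Submodule R N), iSupIndep f ∧
    iSup f = ⊤ ∧ ∀ i, Module.rank R ↥(f i) < ℵ₀

/-- The smallest RD-submodule of `M` containing `Y`. -/
def rdClosure (Y : Set M) : Submodule R M :=
  sInf {N : Submodule R M | IsRD N ∧ Y ⊆ ↑N}


section AuxRDStar

lemma aux_rank_le_of_torsion {N : Type v} [AddCommGroup N] [Module R N]
    {D S : Submodule R N}
    (h : ∀ q ∈ D, ∃ r : R, r ≠ 0 ∧ r • q ∈ S) :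
    Module.rank R ↥D ≤ Module.rank R ↥S := by
  rw [Module.rank_def]
  refine ciSup_le' ?_
  rintro ⟨s, hs⟩
  choose r hr hrS using fun x : s => h ((x : ↥D) : N) (x : ↥D).2
  have hbase : LinearIndependent R (fun x : s => ((x : ↥D) : N)) :=
    hs.map' D.subtype D.ker_subtype
  have hscaled : LinearIndependent R (fun x : s => r x • ((x : ↥D) : N)) := by
    rw [linearIndependent_iff'] at hbase ⊢
    intro t g hsum i hi
    have : ∑ j ∈ t, (g j * r j) • ((j : ↥D) : N) = 0 := by
      simpa [mul_smul] using hsum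
    have := hbase t (fun j => g j * r j) this i hi
    exact (mul_eq_zero.mp this).resolve_right (hr i)
  have hv : LinearIndependent R (fun x : s => (⟨r x • ((x : ↥D) : N), hrS x⟩ : ↥S)) := by
    apply LinearIndependent.of_comp S.subtype
    exact hscaled
  exact hv.cardinal_le_rank

lemma aux_rank_iSup_le {N : Type v} [AddCommGroup N] [Module R N]
    {C : ℕ → Submodule R N} (hmono : Monotone C)
    (h : ∀ n, Module.rank R ↥(C n) ≤ ℵ₀) :
    Module.rank R ↥(⨆ n, C n) ≤ ℵ₀ := by
  rw [Module.rank_def]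
  refine ciSup_le' ?_
  rintro ⟨s, hs⟩
  rw [Cardinal.mk_le_aleph0_iff, Set.countable_coe_iff]
  set t : ℕ → Set ↥(⨆ n, C n) := fun n => {x | x ∈ s ∧ (x : N) ∈ C n} with ht
  have hcover : s ⊆ ⋃ n, t n := by
    intro x hx
    obtain ⟨n, hn⟩ := (Submodule.mem_iSup_of_directed C hmono.directed_le).mp x.2
    exact Set.mem_iUnion.mpr ⟨n, hx, hn⟩
  refine Set.Countable.mono hcover (Set.countable_iUnion fun n => ?_)
  rw [← Set.countable_coe_iff, ← Cardinal.mk_le_aleph0_iff]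
  refine le_trans ?_ (h n)
  have hbase : LinearIndependent R (fun x : s => ((x : ↥(⨆ n, C n)) : N)) :=
    hs.map' _ (Submodule.ker_subtype _)
  have hres : LinearIndependent R (fun x : t n => ((x : ↥(⨆ n, C n)) : N)) := by
    have := hbase.comp (fun x : t n => (⟨(x : ↥(⨆ n, C n)), x.2.1⟩ : s))
      (fun a b hab => Subtype.ext (Subtype.mk_eq_mk.mp hab))
    exact this
  have hv : LinearIndependent R
      (fun x : t n => (⟨((x : ↥(⨆ n, C n)) : N), x.2.2⟩ : ↥(C n))) := by
    apply LinearIndependent.of_comp (C n).subtype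
    exact hres
  exact hv.cardinal_le_rank

/-- The pullback of `S` along torsion inside `Q`. -/
def torsionPull {N : Type v} [AddCommGroup N] [Module R N]
    (Q S : Submodule R N) : Submodule R N where
  carrier := {q | q ∈ Q ∧ ∃ r : R, r ≠ 0 ∧ r • q ∈ S}
  zero_mem' := ⟨Q.zero_mem, 1, one_ne_zero, by simpa using S.zero_mem⟩
  add_mem' := by
    rintro a b ⟨haQ, r, hr, hrS⟩ ⟨hbQ, r', hr', hr'S⟩
    refine ⟨Q.add_mem haQ hbQ, r * r', mul_ne_zero hr hr', ?_⟩
    have : (r * r') • (a + b) = r' • (r • a) + r • (r' • b) := by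
      rw [smul_add]
      congr 1
      · rw [mul_comm, mul_smul]
      · rw [mul_smul]
    rw [this]
    exact S.add_mem (S.smul_mem _ hrS) (S.smul_mem _ hr'S)
  smul_mem' := by
    rintro c a ⟨haQ, r, hr, hrS⟩
    exact ⟨Q.smul_mem c haQ, r, hr, by rw [smul_comm]; exact S.smul_mem c hrS⟩

lemma aux_exists_chain {N : Type v} [AddCommGroup N] [Module R N]
    (Q : Submodule R N) (hQ : Module.rank R ↥Q ≤ ℵ₀) :
    ∃ D : ℕ → Submodule R N, Monotone D ∧ (∀ n, D n ≤ Q) ∧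
      (∀ n, Module.rank R ↥(D n) < ℵ₀) ∧ (⨆ n, D n) = Q := by
  obtain ⟨I, hIind, hImax⟩ := exists_maximal_linearIndepOn R (fun q : ↥Q => (q : N))
  have hIcount : I.Countable := by
    rw [← Set.countable_coe_iff, ← Cardinal.mk_le_aleph0_iff]
    refine le_trans ?_ hQ
    have : LinearIndependent R (fun x : I => (x : ↥Q)) :=
      LinearIndependent.of_comp Q.subtype hIind
    exact this.cardinal_le_rank
  set J : Set N := insert 0 ((fun q : ↥Q => (q : N)) '' I) with hJ
  have hJc : J.Countable := (hIcount.image _).insert 0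
  obtain ⟨e, he⟩ := hJc.exists_eq_range ⟨0, Set.mem_insert _ _⟩
  set S : ℕ → Submodule R N := fun n => Submodule.span R (e '' {k | k < n}) with hS
  have hSmono : Monotone S := fun a b hab =>
    Submodule.span_mono (Set.image_mono fun k hk => lt_of_lt_of_le hk hab)
  set D : ℕ → Submodule R N := fun n => torsionPull Q (S n) with hD
  have hDQ : ∀ n, D n ≤ Q := fun n q hq => hq.1
  refine ⟨D, ?_, hDQ, ?_, ?_⟩
  · intro a b hab q hq
    exact ⟨hq.1, hq.2.choose, hq.2.choose_spec.1, hSmono hab hq.2.choose_spec.2⟩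
  · intro n
    refine lt_of_le_of_lt (aux_rank_le_of_torsion (S := S n) fun q hq => hq.2) ?_
    refine lt_of_le_of_lt (rank_span_le _) ?_
    exact ((Set.finite_Iio n).image e).lt_aleph0
  · refine le_antisymm (iSup_le hDQ) ?_
    intro q hq
    have key : ∃ a : R, a ≠ 0 ∧ a • q ∈ Submodule.span R ((fun q : ↥Q => (q : N)) '' I) := by
      by_cases hqI : (⟨q, hq⟩ : ↥Q) ∈ I
      · exact ⟨1, one_ne_zero, by
          simpa using Submodule.subset_span (Set.mem_image_of_mem _ hqI)⟩
      · exact hImax ⟨q, hq⟩ hqI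
    obtain ⟨a, ha, haq⟩ := key
    have hspan : Submodule.span R ((fun q : ↥Q => (q : N)) '' I) ≤ ⨆ n, S n := by
      rw [Submodule.span_le]
      intro x hx
      have hxJ : x ∈ Set.range e := by rw [← he]; exact Set.mem_insert_of_mem _ hx
      obtain ⟨k, rfl⟩ := hxJ
      have : e k ∈ S (k + 1) :=
        Submodule.subset_span (Set.mem_image_of_mem e (Nat.lt_succ_self k))
      exact (le_iSup S (k + 1) : S (k+1) ≤ _) this
    obtain ⟨n, hn⟩ := (Submodule.mem_iSup_of_directed S hSmono.directed_le).mp (hspan haq)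
    exact (le_iSup D n : D n ≤ _) ⟨hq, a, ha, hn⟩

lemma aux_countable_lift {A B : Submodule R M}
    (h2 : ∀ Q : Submodule R (M ⧸ A), Q ≤ B.map A.mkQ → Module.rank R ↥Q < ℵ₀ →
      ∃ C : Submodule R M, C ≤ B ∧ Module.rank R ↥C ≤ ℵ₀ ∧ C.map A.mkQ = Q)
    (Q : Submodule R (M ⧸ A)) (hQB : Q ≤ B.map A.mkQ) (hQ : Module.rank R ↥Q ≤ ℵ₀) :
    ∃ C : Submodule R M, C ≤ B ∧ Module.rank R ↥C ≤ ℵ₀ ∧ C.map A.mkQ = Q := by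
  obtain ⟨D, hDmono, hDQ, hDrank, hDsup⟩ := aux_exists_chain Q hQ
  choose C hCB hCrank hCmap using fun n => h2 (D n) (le_trans (hDQ n) hQB) (hDrank n)
  refine ⟨⨆ n, (partialSups C) n, ?_, ?_, ?_⟩
  · exact iSup_le fun n => partialSups_le _ _ _ fun m _ => hCB m
  · refine aux_rank_iSup_le (partialSups C).monotone ?_
    intro n
    induction n with
    | zero => rw [partialSups_zero]; exact hCrank 0
    | succ n ih =>
      rw [show n + 1 = Order.succ n from rfl, partialSups_succ]
      refine le_trans (Submodule.rank_add_le_rank_add_rank _ _) ?_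
      calc Module.rank R ↥((partialSups C) n) + Module.rank R ↥(C (n + 1))
          ≤ ℵ₀ + ℵ₀ := add_le_add ih (hCrank (n + 1))
        _ = ℵ₀ := aleph0_add_aleph0
  · rw [iSup_partialSups_eq, Submodule.map_iSup]
    simp_rw [hCmap]
    exact hDsup

end AuxRDStar

/-- RD* is transitive. -/
theorem rdStar_trans [NoZeroSMulDivisors R M] (A B : Submodule R M)
    (hA : IsRDStarWithin A B) (hB : IsRDStar B) : IsRDStar A := by
  obtain ⟨⟨hAB, hArd⟩, hA2⟩ := hA
  obtain ⟨hBrd, hB2⟩ := hB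
  constructor
  · intro r m hrm
    obtain ⟨b, hbB, hb⟩ := hBrd r m (hAB hrm)
    obtain ⟨a, haA, ha⟩ := hArd r b hbB (by rw [hb]; exact hrm)
    exact ⟨a, haA, by rw [ha, hb]⟩
  · intro Q hQ
    have hABc : A ≤ Submodule.comap (LinearMap.id : M →ₗ[R] M) B := hAB
    set f : (M ⧸ A) →ₗ[R] (M ⧸ B) := A.mapQ B LinearMap.id hABc with hf
    have hfπ : ∀ m : M, f (A.mkQ m) = B.mkQ m := fun m => by
      simp [hf, Submodule.mapQ_apply, Submodule.mkQ_apply]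
    obtain ⟨C₁, hC₁rank, hC₁map⟩ := hB2 (Q.map f) (lt_of_le_of_lt (rank_map_le f Q) hQ)
    set Q₂ : Submodule R (M ⧸ A) := (Q ⊔ C₁.map A.mkQ) ⊓ B.map A.mkQ with hQ₂
    have hQ₂rank : Module.rank R ↥Q₂ ≤ ℵ₀ := by
      refine le_trans (Submodule.rank_mono inf_le_left) ?_
      refine le_trans (Submodule.rank_add_le_rank_add_rank _ _) ?_
      calc Module.rank R ↥Q + Module.rank R ↥(C₁.map A.mkQ)
          ≤ ℵ₀ + ℵ₀ := add_le_add hQ.le (le_trans (rank_map_le _ _) hC₁rank)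
        _ = ℵ₀ := aleph0_add_aleph0
    obtain ⟨C₂, hC₂B, hC₂rank, hC₂map⟩ := aux_countable_lift hA2 Q₂ inf_le_right hQ₂rank
    refine ⟨(C₁ ⊔ C₂) ⊓ Q.comap A.mkQ, ?_, ?_⟩
    · refine le_trans (Submodule.rank_mono inf_le_left) ?_
      refine le_trans (Submodule.rank_add_le_rank_add_rank _ _) ?_
      calc Module.rank R ↥C₁ + Module.rank R ↥C₂
          ≤ ℵ₀ + ℵ₀ := add_le_add hC₁rank hC₂rank
        _ = ℵ₀ := aleph0_add_aleph0
    · refine le_antisymm (Submodule.map_le_iff_le_comap.mpr inf_le_right) ?_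
      intro q hq
      obtain ⟨m, rfl⟩ := A.mkQ_surjective q
      have hfq : f (A.mkQ m) ∈ C₁.map B.mkQ := by
        rw [hC₁map]; exact Submodule.mem_map_of_mem hq
      rw [hfπ] at hfq
      obtain ⟨c₁, hc₁, hc₁eq⟩ := hfq
      have hmB : m - c₁ ∈ B := by
        rw [← Submodule.Quotient.eq]
        exact (by simpa [Submodule.mkQ_apply] using hc₁eq.symm)
      have h1 : A.mkQ m - A.mkQ c₁ ∈ Q₂ := by
        refine Submodule.mem_inf.mpr ⟨?_, ?_⟩
        · exact sub_mem (Submodule.mem_sup_left hq)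
            (Submodule.mem_sup_right (Submodule.mem_map_of_mem hc₁))
        · exact ⟨m - c₁, hmB, by rw [map_sub]⟩
      rw [← hC₂map] at h1
      obtain ⟨c₂, hc₂, hc₂eq⟩ := h1
      have hπ : A.mkQ (c₁ + c₂) = A.mkQ m := by
        rw [map_add, hc₂eq]; abel
      refine ⟨c₁ + c₂, ⟨?_, ?_⟩, hπ⟩
      · exact add_mem (Submodule.mem_sup_left hc₁) (Submodule.mem_sup_right hc₂)
      · show A.mkQ (c₁ + c₂) ∈ Q
        rw [hπ]; exact hq
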